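/- Let X₁, …, X_T be measurable spaces and let p and q be probability measures on the product ∏_{t=1}^T X_t obtained by sequential composition of Markov kernels: p has initial law μ₁ and step-t transition kernels κ_t(x_{<t}, ·), and q has initial law ν₁ and step-t transition kernels λ_t(x_{<t}, ·). If TV(μ₁, ν₁) ≤ ε̄₁ and for every t ≥ 2 and every history x_{<t} one has TV(κ_t(x_{<t}, ·), λ_t(x_{<t}, ·)) ≤ ε̄_t, then TV(p, q) ≤ 1 − ∏_{t=1}^T (1 − ε̄_t) ≤ Σ_{t=1}^T ε̄_t. -/

import Mathlib

open MeasureTheory ProbabilityTheory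
open scoped ENNReal

/-- Total variation distance between two measures:
`TV(μ, ν) = sup_A |μ(A) - ν(A)|` over measurable sets `A`. -/
noncomputable def tvDist {X : Type*} [MeasurableSpace X] (μ ν : Measure X) : ℝ :=
  ⨆ s : { s : Set X // MeasurableSet s }, |(μ s.1).toReal - (ν s.1).toReal|

/-- The law on `∏ i : Fin (n+1), X i` obtained by sequential composition of an initial law
`μ` on `X 0` with history-dependent transition kernels
`κ t : (∏ i : Fin (t+1), X i) ⇝ X (t+1)`. -/
noncomputable def seqLaw (X : ℕ → Type*) [∀ n, MeasurableSpace (X n)]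
    (μ : Measure (X 0)) (κ : (t : ℕ) → Kernel (∀ i : Fin (t + 1), X i) (X (t + 1))) :
    (n : ℕ) → Measure (∀ i : Fin (n + 1), X i)
  | 0 => μ.map (fun x => Fin.cons x (fun i : Fin 0 => i.elim0))
  | n + 1 => (seqLaw X μ κ n).bind (fun x => ((κ n) x).map (fun y => Fin.snoc x y))

section Aux

lemma tvDist_le_of_forall {X : Type*} [MeasurableSpace X] {μ ν : Measure X} {c : ℝ}
    (hc : ∀ s : Set X, MeasurableSet s → |(μ s).toReal - (ν s).toReal| ≤ c) :
    tvDist μ ν ≤ c := by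
  haveI : Nonempty { s : Set X // MeasurableSet s } := ⟨⟨∅, MeasurableSet.empty⟩⟩
  exact ciSup_le fun s => hc s.1 s.2

lemma abs_sub_le_tvDist {X : Type*} [MeasurableSpace X] {μ ν : Measure X}
    [IsProbabilityMeasure μ] [IsProbabilityMeasure ν] {s : Set X} (hs : MeasurableSet s) :
    |(μ s).toReal - (ν s).toReal| ≤ tvDist μ ν := by
  have hb : BddAbove (Set.range fun s : { s : Set X // MeasurableSet s } =>
      |(μ s.1).toReal - (ν s.1).toReal|) := by
    refine ⟨1, ?_⟩
    rintro x ⟨t, rfl⟩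
    have h1 : (μ t.1).toReal ≤ 1 := by
      have := ENNReal.toReal_mono (measure_ne_top μ Set.univ) (measure_mono (Set.subset_univ t.1))
      simpa using this
    have h2 : (ν t.1).toReal ≤ 1 := by
      have := ENNReal.toReal_mono (measure_ne_top ν Set.univ) (measure_mono (Set.subset_univ t.1))
      simpa using this
    have h3 : (0:ℝ) ≤ (μ t.1).toReal := ENNReal.toReal_nonneg
    have h4 : (0:ℝ) ≤ (ν t.1).toReal := ENNReal.toReal_nonneg
    rw [abs_le]
    constructor <;> linarith
  exact le_ciSup hb (⟨s, hs⟩ : { s : Set X // MeasurableSet s })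

lemma tvDist_map_le {α β : Type*} [MeasurableSpace α] [MeasurableSpace β]
    (μ ν : Measure α) [IsProbabilityMeasure μ] [IsProbabilityMeasure ν]
    {f : α → β} (hf : Measurable f) : tvDist (μ.map f) (ν.map f) ≤ tvDist μ ν := by
  apply tvDist_le_of_forall
  intro A hA
  rw [Measure.map_apply hf hA, Measure.map_apply hf hA]
  exact abs_sub_le_tvDist (hf hA)

/-- Pointwise quantitative comparison of measures from a TV bound. -/
lemma measure_le_add_of_tvDist {X : Type*} [MeasurableSpace X] {μ ν : Measure X}
    [IsProbabilityMeasure μ] [IsProbabilityMeasure ν] {e : ℝ} (he : 0 ≤ e)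
    (h : tvDist μ ν ≤ e) {s : Set X} (hs : MeasurableSet s) :
    μ s ≤ ν s + ENNReal.ofReal e := by
  have habs := (abs_sub_le_tvDist (μ := μ) (ν := ν) hs).trans h
  have hle : (μ s).toReal ≤ (ν s).toReal + e := by
    have := abs_le.1 habs
    linarith [this.2]
  calc μ s = ENNReal.ofReal ((μ s).toReal) := (ENNReal.ofReal_toReal (measure_ne_top μ s)).symm
    _ ≤ ENNReal.ofReal ((ν s).toReal + e) := ENNReal.ofReal_le_ofReal hle
    _ = ENNReal.ofReal ((ν s).toReal) + ENNReal.ofReal e :=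
        ENNReal.ofReal_add ENNReal.toReal_nonneg he
    _ = ν s + ENNReal.ofReal e := by rw [ENNReal.ofReal_toReal (measure_ne_top ν s)]

lemma measurable_snocFun (X : ℕ → Type*) [∀ n, MeasurableSpace (X n)] (n : ℕ) :
    Measurable (fun p : (∀ i : Fin (n + 1), X i) × X (n + 1) =>
      (Fin.snoc p.1 p.2 : ∀ i : Fin (n + 2), X i)) := by
  apply measurable_pi_lambda
  intro i
  refine Fin.lastCases ?_ ?_ i
  · simpa using measurable_snd
  · intro j
    simp
    exact (measurable_pi_apply j).comp measurable_fst

lemma measurable_snocFamily (X : ℕ → Type*) [∀ n, MeasurableSpace (X n)] (n : ℕ)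
    (κ : Kernel (∀ i : Fin (n + 1), X i) (X (n + 1))) [IsMarkovKernel κ] :
    Measurable (fun x => (κ x).map (fun y => (Fin.snoc x y : ∀ i : Fin (n + 2), X i))) := by
  rw [Measure.measurable_measure]
  intro A hA
  have heq : ∀ x, (κ x).map (fun y => (Fin.snoc x y : ∀ i : Fin (n + 2), X i)) A =
      κ x (Prod.mk x ⁻¹' ((fun p : (∀ i : Fin (n + 1), X i) × X (n + 1) =>
        (Fin.snoc p.1 p.2 : ∀ i : Fin (n + 2), X i)) ⁻¹' A)) := by
    intro x
    have hx : Measurable (fun y => (Fin.snoc x y : ∀ i : Fin (n + 2), X i)) :=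
      (measurable_snocFun X n).comp measurable_prodMk_left
    rw [Measure.map_apply hx hA]
    rfl
  simp only [heq]
  exact Kernel.measurable_kernel_prodMk_left ((measurable_snocFun X n) hA)

lemma seqLaw_isProbabilityMeasure (X : ℕ → Type*) [∀ n, MeasurableSpace (X n)]
    (μ : Measure (X 0)) [IsProbabilityMeasure μ]
    (κ : (t : ℕ) → Kernel (∀ i : Fin (t + 1), X i) (X (t + 1))) [∀ t, IsMarkovKernel (κ t)] :
    ∀ n, IsProbabilityMeasure (seqLaw X μ κ n) := by
  intro n
  induction n with
  | zero =>
    rw [seqLaw]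
    have hm : Measurable (fun x : X 0 => (Fin.cons x (fun i : Fin 0 => i.elim0) :
        ∀ i : Fin (0 + 1), X i)) := by
      apply measurable_pi_lambda
      intro i
      have : i = (0 : Fin 1) := Subsingleton.elim (α := Fin 1) i 0
      subst this
      simp
      exact measurable_id
    exact Measure.isProbabilityMeasure_map hm.aemeasurable
  | succ n ih =>
    rw [seqLaw]
    constructor
    rw [Measure.bind_apply MeasurableSet.univ (measurable_snocFamily X n (κ n)).aemeasurable]
    have h1 : ∀ x, ((κ n) x).map (fun y => (Fin.snoc x y : ∀ i : Fin (n + 2), X i))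
        Set.univ = 1 := by
      intro x
      have hx : Measurable (fun y => (Fin.snoc x y : ∀ i : Fin (n + 2), X i)) :=
        (measurable_snocFun X n).comp measurable_prodMk_left
      rw [Measure.map_apply hx MeasurableSet.univ]
      simp
    simp only [h1, lintegral_one]
    exact ih.measure_univ

/-- Key one-step comparison: if `m ≤ p`, `m ≤ q` and the kernels are pointwise `e`-close,
then the binds are close up to `e * m(univ) + (1 - m(univ))`. -/
lemma bind_le_bind_add {α β : Type*} [MeasurableSpace α] [MeasurableSpace β]
    (p q m : Measure α) [IsProbabilityMeasure p] [IsProbabilityMeasure q] [IsFiniteMeasure m]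
    (hmp : m ≤ p) (hmq : m ≤ q) (f g : α → Measure β) (hf : Measurable f) (hg : Measurable g)
    (hf1 : ∀ x, f x Set.univ ≤ 1) (e : ℝ≥0∞)
    (hfg : ∀ x, ∀ s : Set β, MeasurableSet s → f x s ≤ g x s + e)
    {A : Set β} (hA : MeasurableSet A) :
    p.bind f A ≤ q.bind g A + e * m Set.univ + (1 - m Set.univ) := by
  have hpm : p - m + m = p := Measure.sub_add_cancel_of_le hmp
  have hGmeas : Measurable (fun x => g x A) := (Measure.measurable_coe hA).comp hg
  calc p.bind f A = ∫⁻ x, f x A ∂p := Measure.bind_apply hA hf.aemeasurable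
    _ = ∫⁻ x, f x A ∂(p - m) + ∫⁻ x, f x A ∂m := by
        conv_lhs => rw [← hpm]
        exact lintegral_add_measure _ _ _
    _ ≤ (p - m) Set.univ + ∫⁻ x, (g x A + e) ∂m := by
        apply add_le_add
        · have h1 : ∫⁻ x, f x A ∂(p - m) ≤ ∫⁻ _, 1 ∂(p - m) := by
            apply lintegral_mono
            intro x
            exact le_trans (measure_mono (Set.subset_univ A)) (hf1 x)
          simpa using h1
        · apply lintegral_mono
          intro x
          exact hfg x A hA
    _ = (p Set.univ - m Set.univ) + (∫⁻ x, g x A ∂m + e * m Set.univ) := by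
        rw [Measure.sub_apply MeasurableSet.univ hmp, lintegral_add_right _ measurable_const,
          lintegral_const]
    _ ≤ (1 - m Set.univ) + (∫⁻ x, g x A ∂q + e * m Set.univ) := by
        gcongr
        · simp
    _ = q.bind g A + e * m Set.univ + (1 - m Set.univ) := by
        rw [Measure.bind_apply hA hg.aemeasurable]
        ring

lemma one_sub_prod_le_sum (ε : ℕ → ℝ) :
    ∀ n, (∀ t ≤ n, 0 ≤ ε t) → (∀ t ≤ n, ε t ≤ 1) →
      1 - ∏ t ∈ Finset.range (n + 1), (1 - ε t) ≤ ∑ t ∈ Finset.range (n + 1), ε t := by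
  intro n
  induction n with
  | zero => intro _ _; simp
  | succ n ih =>
    intro h0 h1
    have ih' := ih (fun t ht => h0 t (ht.trans (Nat.le_succ n)))
      (fun t ht => h1 t (ht.trans (Nat.le_succ n)))
    rw [Finset.prod_range_succ, Finset.sum_range_succ]
    have hS : (0:ℝ) ≤ ∑ t ∈ Finset.range (n + 1), ε t := by
      apply Finset.sum_nonneg
      intro t ht
      have := Finset.mem_range.1 ht
      exact h0 t (by omega)
    have he : (0:ℝ) ≤ ε (n + 1) := h0 (n + 1) le_rfl
    have he1 : ε (n + 1) ≤ 1 := h1 (n + 1) le_rfl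
    have hmul : (1 - ∑ t ∈ Finset.range (n + 1), ε t) * (1 - ε (n + 1)) ≤
        (∏ t ∈ Finset.range (n + 1), (1 - ε t)) * (1 - ε (n + 1)) :=
      mul_le_mul_of_nonneg_right (by linarith) (by linarith)
    nlinarith [hmul, mul_nonneg hS he]

end Aux

lemma tv_seqLaw_le (X : ℕ → Type*) [∀ n, MeasurableSpace (X n)]
    (μ ν : Measure (X 0)) [IsProbabilityMeasure μ] [IsProbabilityMeasure ν]
    (κ lam : (t : ℕ) → Kernel (∀ i : Fin (t + 1), X i) (X (t + 1)))
    [∀ t, IsMarkovKernel (κ t)] [∀ t, IsMarkovKernel (lam t)] (ε : ℕ → ℝ) :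
    ∀ n, (∀ t ≤ n, 0 ≤ ε t) → (∀ t ≤ n, ε t ≤ 1) → tvDist μ ν ≤ ε 0 →
      (∀ t < n, ∀ x, tvDist ((κ t) x) ((lam t) x) ≤ ε (t + 1)) →
      tvDist (seqLaw X μ κ n) (seqLaw X ν lam n) ≤
        1 - ∏ t ∈ Finset.range (n + 1), (1 - ε t) := by
  intro n
  induction n with
  | zero =>
    intro _ _ hinit _
    have hc : Measurable (fun x : X 0 => (Fin.cons x (fun i : Fin 0 => i.elim0) :
        ∀ i : Fin (0 + 1), X i)) := by
      apply measurable_pi_lambda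
      intro i
      have : i = (0 : Fin 1) := Subsingleton.elim (α := Fin 1) i 0
      subst this
      simp
      exact measurable_id
    have : tvDist (seqLaw X μ κ 0) (seqLaw X ν lam 0) ≤ ε 0 := by
      rw [seqLaw, seqLaw]
      exact (tvDist_map_le μ ν hc).trans hinit
    simpa using this
  | succ n ih =>
    intro hε0 hε1 hinit hstep
    have ih' := ih (fun t ht => hε0 t (ht.trans (Nat.le_succ n)))
      (fun t ht => hε1 t (ht.trans (Nat.le_succ n))) hinit
      (fun t ht => hstep t (ht.trans (Nat.lt_succ_self n)))
    set P := seqLaw X μ κ n with hP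
    set Q := seqLaw X ν lam n with hQ
    haveI : IsProbabilityMeasure P := seqLaw_isProbabilityMeasure X μ κ n
    haveI : IsProbabilityMeasure Q := seqLaw_isProbabilityMeasure X ν lam n
    -- Hahn decomposition of P vs Q
    obtain ⟨s, hs, hQP, hPQ⟩ := hahn_decomposition (μ := P) (ν := Q)
    set m : Measure (∀ i : Fin (n + 1), X i) := Q.restrict s + P.restrict sᶜ with hm
    have hmP : m ≤ P := by
      rw [Measure.le_iff]
      intro A hA
      have h1 : Q (A ∩ s) ≤ P (A ∩ s) :=
        hQP _ (hA.inter hs) Set.inter_subset_right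
      calc m A = Q (A ∩ s) + P (A ∩ sᶜ) := by
            rw [hm, Measure.add_apply, Measure.restrict_apply hA, Measure.restrict_apply hA]
        _ ≤ P (A ∩ s) + P (A ∩ sᶜ) := by gcongr
        _ = P A := by
            rw [← Set.diff_eq]
            exact measure_inter_add_diff A hs
    have hmQ : m ≤ Q := by
      rw [Measure.le_iff]
      intro A hA
      have h1 : P (A ∩ sᶜ) ≤ Q (A ∩ sᶜ) :=
        hPQ _ (hA.inter hs.compl) Set.inter_subset_right
      calc m A = Q (A ∩ s) + P (A ∩ sᶜ) := by
            rw [hm, Measure.add_apply, Measure.restrict_apply hA, Measure.restrict_apply hA]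
        _ ≤ Q (A ∩ s) + Q (A ∩ sᶜ) := by gcongr
        _ = Q A := by
            rw [← Set.diff_eq]
            exact measure_inter_add_diff A hs
    haveI : IsFiniteMeasure m := by
      constructor
      exact lt_of_le_of_lt (hmP Set.univ) (measure_lt_top P Set.univ)
    have hm1 : m Set.univ ≤ 1 := by
      have := hmP Set.univ
      simpa using this
    set w : ℝ := (m Set.univ).toReal with hw
    have hw0 : 0 ≤ w := ENNReal.toReal_nonneg
    have hw1 : w ≤ 1 := by
      rw [hw]
      have := ENNReal.toReal_mono (by simp) hm1
      simpa using this
    -- w ≥ 1 - tvDist P Q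
    have hwD : 1 - tvDist P Q ≤ w := by
      have hmu : m Set.univ = Q s + P sᶜ := by
        rw [hm, Measure.add_apply, Measure.restrict_apply MeasurableSet.univ,
          Measure.restrict_apply MeasurableSet.univ, Set.univ_inter, Set.univ_inter]
      have hPc : (P sᶜ).toReal = 1 - (P s).toReal := by
        rw [measure_compl hs (measure_ne_top P s), measure_univ,
          ENNReal.toReal_sub_of_le prob_le_one ENNReal.one_ne_top]
        simp
      have hweq : w = (Q s).toReal + (1 - (P s).toReal) := by
        rw [hw, hmu, ENNReal.toReal_add (measure_ne_top Q s) (measure_ne_top P sᶜ), hPc]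
      have hD : (P s).toReal - (Q s).toReal ≤ tvDist P Q :=
        (le_abs_self _).trans (abs_sub_le_tvDist hs)
      rw [hweq]
      linarith
    -- now bound each set
    have hεn0 : 0 ≤ ε (n + 1) := hε0 (n + 1) le_rfl
    have hεn1 : ε (n + 1) ≤ 1 := hε1 (n + 1) le_rfl
    set e : ℝ≥0∞ := ENNReal.ofReal (ε (n + 1)) with hee
    set F := fun x => ((κ n) x).map (fun y => (Fin.snoc x y : ∀ i : Fin (n + 2), X i)) with hF
    set G := fun x => ((lam n) x).map
      (fun y => (Fin.snoc x y : ∀ i : Fin (n + 2), X i)) with hG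
    have hFmeas : Measurable F := measurable_snocFamily X n (κ n)
    have hGmeas : Measurable G := measurable_snocFamily X n (lam n)
    have hsnocx : ∀ x : (∀ i : Fin (n + 1), X i),
        Measurable (fun y => (Fin.snoc x y : ∀ i : Fin (n + 2), X i)) :=
      fun x => (measurable_snocFun X n).comp measurable_prodMk_left
    have hFG : ∀ x, ∀ B : Set (∀ i : Fin (n + 2), X i), MeasurableSet B → F x B ≤ G x B + e := by
      intro x B hB
      rw [hF, hG, Measure.map_apply (hsnocx x) hB, Measure.map_apply (hsnocx x) hB]
      exact measure_le_add_of_tvDist hεn0 (hstep n (Nat.lt_succ_self n) x) ((hsnocx x) hB)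
    have hGF : ∀ x, ∀ B : Set (∀ i : Fin (n + 2), X i), MeasurableSet B → G x B ≤ F x B + e := by
      intro x B hB
      rw [hF, hG, Measure.map_apply (hsnocx x) hB, Measure.map_apply (hsnocx x) hB]
      have hsym : tvDist ((lam n) x) ((κ n) x) ≤ ε (n + 1) := by
        have := hstep n (Nat.lt_succ_self n) x
        apply tvDist_le_of_forall
        intro t ht
        rw [abs_sub_comm]
        exact (abs_sub_le_tvDist ht).trans this
      exact measure_le_add_of_tvDist hεn0 hsym ((hsnocx x) hB)
    have hF1 : ∀ x, F x Set.univ ≤ 1 := by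
      intro x
      rw [hF, Measure.map_apply (hsnocx x) MeasurableSet.univ]
      simp
    have hG1 : ∀ x, G x Set.univ ≤ 1 := by
      intro x
      rw [hG, Measure.map_apply (hsnocx x) MeasurableSet.univ]
      simp
    have hCne : e * m Set.univ + (1 - m Set.univ) ≠ ⊤ := by
      apply ENNReal.add_ne_top.2
      constructor
      · exact ENNReal.mul_ne_top ENNReal.ofReal_ne_top (measure_ne_top m Set.univ)
      · exact (lt_of_le_of_lt tsub_le_self (by norm_num)).ne
    have hCtoReal : (e * m Set.univ + (1 - m Set.univ)).toReal = ε (n + 1) * w + (1 - w) := by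
      rw [ENNReal.toReal_add (ENNReal.mul_ne_top ENNReal.ofReal_ne_top (measure_ne_top m _))
        ((lt_of_le_of_lt tsub_le_self (show (1:ℝ≥0∞) < ⊤ by norm_num)).ne),
        ENNReal.toReal_mul, ENNReal.toReal_ofReal hεn0,
        ENNReal.toReal_sub_of_le hm1 (by simp)]
      simp [hw]
    apply tvDist_le_of_forall
    intro A hA
    have hbind : seqLaw X μ κ (n + 1) = P.bind F ∧ seqLaw X ν lam (n + 1) = Q.bind G := by
      constructor <;> rw [seqLaw]
    rw [hbind.1, hbind.2]
    have h1 : P.bind F A ≤ Q.bind G A + (e * m Set.univ + (1 - m Set.univ)) := by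
      have := bind_le_bind_add P Q m hmP hmQ F G hFmeas hGmeas hF1 e hFG hA
      calc P.bind F A ≤ Q.bind G A + e * m Set.univ + (1 - m Set.univ) := this
        _ = Q.bind G A + (e * m Set.univ + (1 - m Set.univ)) := by ring
    have h2 : Q.bind G A ≤ P.bind F A + (e * m Set.univ + (1 - m Set.univ)) := by
      have := bind_le_bind_add Q P m hmQ hmP G F hGmeas hFmeas hG1 e hGF hA
      calc Q.bind G A ≤ P.bind F A + e * m Set.univ + (1 - m Set.univ) := this
        _ = P.bind F A + (e * m Set.univ + (1 - m Set.univ)) := by ring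
    have habs : |(P.bind F A).toReal - (Q.bind G A).toReal| ≤ ε (n + 1) * w + (1 - w) := by
      rw [abs_le]
      have hPA : P.bind F A ≠ ⊤ := by
        refine (lt_of_le_of_lt ?_ (show (1:ℝ≥0∞) < ⊤ by norm_num)).ne
        rw [Measure.bind_apply hA hFmeas.aemeasurable]
        calc ∫⁻ x, F x A ∂P ≤ ∫⁻ _, 1 ∂P := by
              apply lintegral_mono
              intro x
              exact le_trans (measure_mono (Set.subset_univ A)) (hF1 x)
          _ = 1 := by simp
      have hQA : Q.bind G A ≠ ⊤ := by
        refine (lt_of_le_of_lt ?_ (show (1:ℝ≥0∞) < ⊤ by norm_num)).ne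
        rw [Measure.bind_apply hA hGmeas.aemeasurable]
        calc ∫⁻ x, G x A ∂Q ≤ ∫⁻ _, 1 ∂Q := by
              apply lintegral_mono
              intro x
              exact le_trans (measure_mono (Set.subset_univ A)) (hG1 x)
          _ = 1 := by simp
      constructor
      · have := ENNReal.toReal_mono (ENNReal.add_ne_top.2 ⟨hPA, hCne⟩) h2
        rw [ENNReal.toReal_add hPA hCne, hCtoReal] at this
        linarith
      · have := ENNReal.toReal_mono (ENNReal.add_ne_top.2 ⟨hQA, hCne⟩) h1
        rw [ENNReal.toReal_add hQA hCne, hCtoReal] at this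
        linarith
    refine le_trans habs ?_
    -- final arithmetic
    rw [Finset.prod_range_succ]
    set Pr : ℝ := ∏ t ∈ Finset.range (n + 1), (1 - ε t) with hPr
    have hPr0 : 0 ≤ Pr := by
      apply Finset.prod_nonneg
      intro t ht
      have hmem := Finset.mem_range.1 ht
      have h := hε1 t (by omega)
      linarith
    have hwPr : Pr ≤ w := le_trans (by linarith [ih']) hwD
    nlinarith [mul_le_mul_of_nonneg_left hwPr (by linarith : (0:ℝ) ≤ 1 - ε (n + 1))]

/-- **Accumulation of local deviations (worst case).** For sequential laws `p = seqLaw μ κ`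
and `q = seqLaw ν lam` on `T = n + 1` coordinates, if `TV(μ, ν) ≤ ε 0` and for every step
`t < n` and every history `x` one has `TV(κ t x, lam t x) ≤ ε (t+1)` (with each `ε t ∈ [0,1]`),
then `TV(p, q) ≤ 1 - ∏ t, (1 - ε t) ≤ ∑ t, ε t`. -/
theorem tv_accumulation_worst_case (X : ℕ → Type*) [∀ n, MeasurableSpace (X n)] (n : ℕ)
    (μ ν : Measure (X 0)) [IsProbabilityMeasure μ] [IsProbabilityMeasure ν]
    (κ lam : (t : ℕ) → Kernel (∀ i : Fin (t + 1), X i) (X (t + 1)))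
    [∀ t, IsMarkovKernel (κ t)] [∀ t, IsMarkovKernel (lam t)]
    (ε : ℕ → ℝ) (hε0 : ∀ t ≤ n, 0 ≤ ε t) (hε1 : ∀ t ≤ n, ε t ≤ 1)
    (hinit : tvDist μ ν ≤ ε 0)
    (hstep : ∀ t < n, ∀ x, tvDist ((κ t) x) ((lam t) x) ≤ ε (t + 1)) :
    (tvDist (seqLaw X μ κ n) (seqLaw X ν lam n) ≤
        1 - ∏ t ∈ Finset.range (n + 1), (1 - ε t)) ∧
      (1 - ∏ t ∈ Finset.range (n + 1), (1 - ε t) ≤ ∑ t ∈ Finset.range (n + 1), ε t) := by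
  exact ⟨tv_seqLaw_le X μ ν κ lam ε n hε0 hε1 hinit hstep, one_sub_prod_le_sum ε n hε0 hε1⟩
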